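/- The solution of the n-state problem is unique: if x and x′ both satisfy x_i ≥ 0 for all i and N − diag(x), N − diag(x′) positive semidefinite, and both maximize the success probability p over this feasible set (i.e., p(x) = p(x′) ≥ p(y) for every feasible y), then x = x′. -/

import Mathlib

open ComplexOrder

open Matrix


lemma aux_exists_preimage_single {n : ℕ} (M : Matrix (Fin n) (Fin n) ℂ)
    (hH : M.IsHermitian) (i : Fin n)
    (hker : ∀ v, M *ᵥ v = 0 → v i = 0) :
    ∃ w : Fin n → ℂ, M *ᵥ w = Pi.single i 1 := by
  classical
  set T : (Fin n → ℂ) →ₗ[ℂ] (Fin n → ℂ) := M.mulVecLin with hT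
  have hle : LinearMap.ker T ≤ LinearMap.ker
      (LinearMap.proj (R := ℂ) (φ := fun _ : Fin n => ℂ) i) := by
    intro v hv
    rw [LinearMap.mem_ker] at hv ⊢
    exact hker v hv
  set fbar := (LinearMap.ker T).liftQ (LinearMap.proj (R := ℂ) (φ := fun _ : Fin n => ℂ) i) hle
    with hfbar
  set e := T.quotKerEquivRange with he
  set g : LinearMap.range T →ₗ[ℂ] ℂ := fbar ∘ₗ (e.symm : _ ≃ₗ[ℂ] _).toLinearMap with hg
  obtain ⟨h, hh⟩ := g.exists_extend
  have hhv : ∀ v, h (T v) = v i := by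
    intro v
    have h1 : h (T v) = g ⟨T v, LinearMap.mem_range_self T v⟩ :=
      LinearMap.congr_fun hh ⟨T v, LinearMap.mem_range_self T v⟩
    rw [h1, hg]
    simp only [LinearMap.coe_comp, Function.comp_apply, LinearEquiv.coe_coe]
    rw [LinearMap.quotKerEquivRange_symm_apply_image T v (LinearMap.mem_range_self T v)]
    rfl
  set c : Fin n → ℂ := fun j => h (Pi.single j 1) with hc
  have hdot : ∀ v : Fin n → ℂ, (c ᵥ* M) ⬝ᵥ v = v i := by
    intro v
    rw [← dotProduct_mulVec, dotProduct_comm]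
    have := LinearMap.pi_apply_eq_sum_univ h (M *ᵥ v)
    rw [← hhv v]
    simp only [hT, mulVecLin_apply]
    rw [this]
    simp only [dotProduct, hc, smul_eq_mul]
    refine Finset.sum_congr rfl fun j _ => ?_
    congr 1
    show h (Pi.single j 1) = _
    congr 1
    funext k
    simp [Pi.single_apply, eq_comm]
  have hvm : c ᵥ* M = Pi.single i 1 := by
    funext j
    have := hdot (Pi.single j 1)
    rw [dotProduct_single, mul_one] at this
    rw [this]
    simp [Pi.single_apply, eq_comm]
  refine ⟨star c, ?_⟩
  have := congrArg star hvm
  rw [star_vecMul, hH.eq] at this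
  rw [this]
  funext j
  simp [Pi.single_apply, apply_ite (star : ℂ → ℂ)]

lemma aux_perturb {n : ℕ} (M : Matrix (Fin n) (Fin n) ℂ) (hM : M.PosSemidef) (i : Fin n)
    (w : Fin n → ℂ) (hw : M *ᵥ w = Pi.single i 1) :
    ∃ ε : ℝ, 0 < ε ∧ ∀ v : Fin n → ℂ,
      (ε : ℂ) * ((starRingEnd ℂ) (v i) * v i) ≤ star v ⬝ᵥ M *ᵥ v := by
  classical
  set c : ℂ := star w ⬝ᵥ M *ᵥ w with hc
  have hc0 : 0 ≤ c := hM.dotProduct_mulVec_nonneg w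
  have hcne : c ≠ 0 := by
    intro h0
    have := (hM.dotProduct_mulVec_zero_iff w).mp (hc ▸ h0 : star w ⬝ᵥ M *ᵥ w = 0)
    rw [hw] at this
    have := congrFun this i
    simp at this
  obtain ⟨hcre, hcim⟩ := Complex.nonneg_iff.mp hc0
  have hcrepos : 0 < c.re := lt_of_le_of_ne hcre (fun h => hcne (Complex.ext h.symm hcim.symm))
  have hcc : (c.re : ℂ) = c := Complex.ext rfl (by simp [← hcim])
  have hccs : (starRingEnd ℂ) c = c := by
    rw [← hcc]; exact Complex.conj_ofReal _
  refine ⟨(c.re)⁻¹, by positivity, fun v => ?_⟩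
  set t : ℂ := v i / c with ht
  have key : 0 ≤ star (v - t • w) ⬝ᵥ M *ᵥ (v - t • w) := hM.dotProduct_mulVec_nonneg _
  have f1 : star v ⬝ᵥ M *ᵥ w = (starRingEnd ℂ) (v i) := by
    rw [hw, dotProduct_single, mul_one, Pi.star_apply]
    rfl
  have f2 : star w ⬝ᵥ M *ᵥ v = v i := by
    rw [dotProduct_mulVec]
    have : star w ᵥ* M = Pi.single i 1 := by
      have := star_mulVec M w
      rw [hM.1.eq] at this
      rw [← this, hw]
      funext j
      simp [Pi.single_apply, apply_ite (star : ℂ → ℂ)]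
    rw [this, single_dotProduct, one_mul]
  have expand : star (v - t • w) ⬝ᵥ M *ᵥ (v - t • w)
      = star v ⬝ᵥ M *ᵥ v - t * ((starRingEnd ℂ) (v i)) - (starRingEnd ℂ) t * v i
        + (starRingEnd ℂ) t * (t * c) := by
    rw [mulVec_sub, mulVec_smul, star_sub, star_smul]
    simp only [sub_dotProduct, dotProduct_sub, smul_dotProduct, dotProduct_smul, smul_eq_mul,
      star_trivial, RCLike.star_def]
    rw [f1, f2, hc]
    ring
  have heq : star v ⬝ᵥ M *ᵥ v - ((c.re : ℂ))⁻¹ * ((starRingEnd ℂ) (v i) * v i)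
      = star v ⬝ᵥ M *ᵥ v - t * ((starRingEnd ℂ) (v i)) - (starRingEnd ℂ) t * v i
        + (starRingEnd ℂ) t * (t * c) := by
    rw [hcc, ht, map_div₀, hccs]
    field_simp
    ring
  rw [expand, ← heq] at key
  have : (((c.re)⁻¹ : ℝ) : ℂ) = ((c.re : ℂ))⁻¹ := by push_cast; ring
  rw [this]
  exact sub_nonneg.mp key

lemma aux_herm {n : ℕ} {N : Matrix (Fin n) (Fin n) ℂ} (hN : N.IsHermitian) (r : Fin n → ℝ) :
    (N - Matrix.diagonal (fun j => (r j : ℂ))).IsHermitian := by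
  refine hN.sub (Matrix.isHermitian_diagonal_iff.mpr fun j => ?_)
  rw [isSelfAdjoint_iff, RCLike.star_def]
  exact Complex.conj_ofReal (r j)

/-- Uniqueness of the solution of the `n`-state unambiguous discrimination problem:
if `x` and `x'` are both feasible (nonnegative components and `N - diag x` positive
semidefinite) and both maximize the success probability `p(x) = ∑ i, η i * x i`
over the feasible set, then `x = x'`. -/
theorem unique_solution_n_state_problem
    (n : ℕ) (hn : 1 ≤ n)
    (N : Matrix (Fin n) (Fin n) ℂ) (hN : N.PosDef) (hNdiag : ∀ i, N i i = 1)
    (η : Fin n → ℝ) (hη : ∀ i, 0 < η i) (hηsum : ∑ i, η i = 1)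
    (x x' : Fin n → ℝ)
    (hx0 : ∀ i, 0 ≤ x i) (hx'0 : ∀ i, 0 ≤ x' i)
    (hxF : (N - Matrix.diagonal (fun i => (x i : ℂ))).PosSemidef)
    (hx'F : (N - Matrix.diagonal (fun i => (x' i : ℂ))).PosSemidef)
    (hxOpt : ∀ y : Fin n → ℝ, (∀ i, 0 ≤ y i) →
      (N - Matrix.diagonal (fun i => (y i : ℂ))).PosSemidef →
      ∑ i, η i * y i ≤ ∑ i, η i * x i)
    (hx'Opt : ∀ y : Fin n → ℝ, (∀ i, 0 ≤ y i) →
      (N - Matrix.diagonal (fun i => (y i : ℂ))).PosSemidef →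
      ∑ i, η i * y i ≤ ∑ i, η i * x' i) :
    x = x' := by
  classical
  by_contra hne
  obtain ⟨i, hi⟩ : ∃ i, x i ≠ x' i := by
    by_contra h; push_neg at h; exact hne (funext h)
  have hpeq : ∑ j, η j * x j = ∑ j, η j * x' j :=
    le_antisymm (hx'Opt x hx0 hxF) (hxOpt x' hx'0 hx'F)
  set z : Fin n → ℝ := fun j => (x j + x' j) / 2 with hzdef
  have hz0 : ∀ j, 0 ≤ z j := fun j => by
    have := hx0 j; have := hx'0 j; rw [hzdef]; positivity
  set A := N - Matrix.diagonal (fun j => (x j : ℂ)) with hA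
  set B := N - Matrix.diagonal (fun j => (x' j : ℂ)) with hB
  set M := N - Matrix.diagonal (fun j => (z j : ℂ)) with hM
  have hAB : A + B = (2 : ℂ) • M := by
    rw [hA, hB, hM]
    ext j k
    simp only [Matrix.add_apply, Matrix.sub_apply, Matrix.smul_apply, Matrix.diagonal_apply,
      hzdef, smul_eq_mul]
    split_ifs
    · push_cast; ring
    · ring
  have hq2 : ∀ v : Fin n → ℂ,
      star v ⬝ᵥ A *ᵥ v + star v ⬝ᵥ B *ᵥ v = 2 * (star v ⬝ᵥ M *ᵥ v) := by
    intro v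
    have := congrArg (fun P : Matrix (Fin n) (Fin n) ℂ => star v ⬝ᵥ P *ᵥ v) hAB
    simpa [Matrix.add_mulVec, dotProduct_add, Matrix.smul_mulVec, smul_eq_mul]
      using this
  have hMH : M.IsHermitian := hM ▸ aux_herm hN.1 z
  have hMq : ∀ v : Fin n → ℂ, 0 ≤ star v ⬝ᵥ M *ᵥ v := by
    intro v
    have h2 : (0 : ℂ) ≤ 2 * (star v ⬝ᵥ M *ᵥ v) := by
      rw [← hq2 v]; exact add_nonneg (hxF.dotProduct_mulVec_nonneg v) (hx'F.dotProduct_mulVec_nonneg v)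
    obtain ⟨h2r, h2i⟩ := Complex.nonneg_iff.mp h2
    refine Complex.nonneg_iff.mpr ⟨?_, ?_⟩
    · have : (2 * (star v ⬝ᵥ M *ᵥ v)).re = 2 * (star v ⬝ᵥ M *ᵥ v).re := by
        simp [Complex.mul_re]
      rw [this] at h2r; linarith
    · have : (2 * (star v ⬝ᵥ M *ᵥ v)).im = 2 * (star v ⬝ᵥ M *ᵥ v).im := by
        simp [Complex.mul_im]
      rw [this] at h2i; linarith
  have hMpsd : M.PosSemidef := .of_dotProduct_mulVec_nonneg hMH hMq
  -- kernel property
  have hker : ∀ v : Fin n → ℂ, M *ᵥ v = 0 → v i = 0 := by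
    intro v hv
    have hq : star v ⬝ᵥ M *ᵥ v = 0 := by rw [hv, dotProduct_zero]
    have hsum : star v ⬝ᵥ A *ᵥ v + star v ⬝ᵥ B *ᵥ v = 0 := by
      rw [hq2 v, hq, mul_zero]
    have hqA : star v ⬝ᵥ A *ᵥ v = 0 := by
      refine le_antisymm ?_ (hxF.dotProduct_mulVec_nonneg v)
      rw [eq_neg_of_add_eq_zero_left hsum]
      exact neg_nonpos.mpr (hx'F.dotProduct_mulVec_nonneg v)
    have hqB : star v ⬝ᵥ B *ᵥ v = 0 := by
      rw [← hsum, hqA, zero_add]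
    have hAv : A *ᵥ v = 0 := (hxF.dotProduct_mulVec_zero_iff v).mp hqA
    have hBv : B *ᵥ v = 0 := (hx'F.dotProduct_mulVec_zero_iff v).mp hqB
    have hd : (A - B) *ᵥ v = 0 := by rw [Matrix.sub_mulVec, hAv, hBv, sub_zero]
    have hABd : A - B = Matrix.diagonal (fun j => ((x' j : ℂ) - (x j : ℂ))) := by
      rw [hA, hB, ← Matrix.diagonal_sub]
      abel
    rw [hABd] at hd
    have := congrFun hd i
    rw [Matrix.mulVec_diagonal] at this
    have hcoef : ((x' i : ℂ) - (x i : ℂ)) ≠ 0 := by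
      rw [sub_ne_zero]
      exact fun h => hi (by exact_mod_cast h.symm)
    exact (mul_eq_zero.mp this).resolve_left hcoef
  obtain ⟨w, hw⟩ := aux_exists_preimage_single M hMH i hker
  obtain ⟨ε, hεpos, hεle⟩ := aux_perturb M hMpsd i w hw
  -- the improved point
  set y : Fin n → ℝ := fun j => z j + if j = i then ε else 0 with hydef
  have hy0 : ∀ j, 0 ≤ y j := by
    intro j
    simp only [hydef]
    split_ifs with h
    · linarith [hz0 j, hεpos]
    · simpa using hz0 j
  have hsplit : N - Matrix.diagonal (fun j => (y j : ℂ))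
      = M - Matrix.diagonal (fun j => if j = i then (ε : ℂ) else 0) := by
    rw [hM]
    ext j k
    simp only [Matrix.sub_apply, Matrix.diagonal_apply, hydef]
    split_ifs <;> push_cast <;> ring
  have hyF : (N - Matrix.diagonal (fun j => (y j : ℂ))).PosSemidef := by
    refine .of_dotProduct_mulVec_nonneg (aux_herm hN.1 y) ?_
    intro v
    rw [hsplit, Matrix.sub_mulVec, dotProduct_sub]
    have hD : star v ⬝ᵥ (Matrix.diagonal (fun j => if j = i then (ε : ℂ) else 0)) *ᵥ v
        = (ε : ℂ) * ((starRingEnd ℂ) (v i) * v i) := by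
      simp only [dotProduct, Matrix.mulVec_diagonal, Pi.star_apply, ite_mul, zero_mul,
        mul_ite, mul_zero]
      rw [Finset.sum_ite_eq' Finset.univ i (fun j => star (v j) * ((ε : ℂ) * v j))]
      simp [RCLike.star_def]
      ring
    rw [hD]
    exact sub_nonneg.mpr (hεle v)
  -- success probabilities
  have hpz : ∑ j, η j * z j = ∑ j, η j * x j := by
    have : ∀ j, η j * z j = (η j * x j + η j * x' j) / 2 := by
      intro j; simp only [hzdef]; ring
    rw [Finset.sum_congr rfl (fun j _ => this j), ← Finset.sum_div, Finset.sum_add_distrib,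
      ← hpeq]
    ring
  have hpy : ∑ j, η j * y j = ∑ j, η j * x j + η i * ε := by
    have : ∀ j, η j * y j = η j * z j + (if j = i then η j * ε else 0) := by
      intro j; simp only [hydef]; split_ifs <;> ring
    rw [Finset.sum_congr rfl (fun j _ => this j), Finset.sum_add_distrib,
      Finset.sum_ite_eq' Finset.univ i (fun j => η j * ε)]
    simp [hpz]
  have := hxOpt y hy0 hyF
  rw [hpy] at this
  nlinarith [mul_pos (hη i) hεpos]
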